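/- Let g ∈ ℂ[Y, Z] with g ≠ 0 and h ∈ ℂ[Z] with h ≠ 0, set d := 2 + deg_Y g, and let φ be the ℂ-algebra endomorphism of ℂ[X, Y, Z] with φ(X) = X + g(Y, Z), φ(Y) = Y + h(Z), φ(Z) = Z. Then the minimal polynomial of the triangular automorphism F = (X + g(Y,Z), Y + h(Z), Z) of ℂ³ is (T − 1)^d: for each variable w ∈ {X, Y, Z}, Σ_{m=0}^{d} (−1)^m C(d,m) φ^[m](w) = 0, and no nonzero polynomial p ∈ ℂ[T] of degree less than d satisfies Σ_m (coeff of T^m in p)·φ^[m](w) = 0 for all w ∈ {X, Y, Z}. -/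

import Mathlib

open Finset Polynomial
open scoped fwdDiff

open Finset Polynomial
open scoped fwdDiff

namespace TriangularAux

/-- coefficients of `taylor a Q` agree with those of `Q` above the degree. -/
lemma taylor_coeff_of_natDegree_le {A : Type*} [CommRing A] (Q : A[X]) (a : A) (k : ℕ)
    (hk : Q.natDegree ≤ k) : (Polynomial.taylor a Q).coeff k = Q.coeff k := by
  rw [Polynomial.taylor_coeff]
  have hC : Polynomial.hasseDeriv k Q = Polynomial.C (Q.coeff k) := by
    ext n
    rw [Polynomial.hasseDeriv_coeff, Polynomial.coeff_C]
    rcases n with _ | n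
    · simp
    · have : Q.coeff (n + 1 + k) = 0 :=
        Polynomial.coeff_eq_zero_of_natDegree_lt (by omega)
      simp [this]
  rw [hC, Polynomial.eval_C]

lemma natDegree_taylor_sub_le {A : Type*} [CommRing A] (Q : A[X]) (a : A) (r : ℕ)
    (hQ : Q.natDegree ≤ r + 1) : (Polynomial.taylor a Q - Q).natDegree ≤ r := by
  rw [Polynomial.natDegree_le_iff_coeff_eq_zero]
  intro k hk
  have hk' : Q.natDegree ≤ k := by omega
  rw [Polynomial.coeff_sub, taylor_coeff_of_natDegree_le Q a k hk', sub_self]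

lemma taylor_sub_coeff {A : Type*} [CommRing A] (Q : A[X]) (a : A) (r : ℕ)
    (hQ : Q.natDegree ≤ r + 1) :
    (Polynomial.taylor a Q - Q).coeff r = (r + 1 : A) * Q.coeff (r + 1) * a := by
  rw [Polynomial.coeff_sub, Polynomial.taylor_coeff]
  have hC : Polynomial.hasseDeriv r Q
      = Polynomial.C (Q.coeff r) + Polynomial.C ((r + 1 : A) * Q.coeff (r + 1)) * Polynomial.X := by
    ext n
    rw [Polynomial.hasseDeriv_coeff, Polynomial.coeff_add, Polynomial.coeff_C,
      Polynomial.coeff_C_mul, Polynomial.coeff_X]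
    rcases n with _ | n
    · simp
    · rcases n with _ | n
      · rw [Nat.add_comm 1 r, Nat.choose_succ_self_right]
        simp
      · have : Q.coeff (n + 1 + 1 + r) = 0 :=
          Polynomial.coeff_eq_zero_of_natDegree_lt (by omega)
        simp [this]
  rw [hC]
  simp [mul_comm]

end TriangularAux

namespace TriangularAux

variable {M : Type*} [AddCommGroup M] [Module ℂ M]

lemma fwdDiff_iter_zero_fun (n : ℕ) :
    (fwdDiff (1:ℕ))^[n] (fun _ : ℕ => (0 : M)) = fun _ => 0 := by
  induction n with
  | zero => rfl
  | succ k ih => rw [Function.iterate_succ_apply, fwdDiff_const]; exact ih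

lemma fwdDiff_iter_const_eq_zero (c : M) (n : ℕ) (hn : n ≠ 0) :
    (fwdDiff (1:ℕ))^[n] (fun _ : ℕ => c) = fun _ => 0 := by
  obtain ⟨k, rfl⟩ := Nat.exists_eq_succ_of_ne_zero hn
  rw [Function.iterate_succ_apply, fwdDiff_const, fwdDiff_iter_zero_fun]

/-- rewrite the alternating binomial sum as a `d`-th forward difference -/
lemma alt_sum_eq_fwdDiff (u : ℕ → M) (d : ℕ) :
    ∑ m ∈ Finset.range (d + 1), ((-1 : ℂ) ^ m * (d.choose m : ℂ)) • u m
      = ((-1 : ℂ) ^ d) • (fwdDiff (1:ℕ))^[d] u 0 := by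
  rw [fwdDiff_iter_eq_sum_shift, smul_sum]
  refine Finset.sum_congr rfl fun k hk => ?_
  have hk' : k ≤ d := by simpa using Nat.lt_succ_iff.mp (Finset.mem_range.mp hk)
  have h1 : (0 : ℕ) + k • (1 : ℕ) = k := by simp
  rw [h1, ← Int.cast_smul_eq_zsmul ℂ, smul_smul]
  congr 1
  push_cast
  rw [← mul_assoc, ← pow_add]
  have : d + (d - k) = k + 2 * (d - k) := by omega
  rw [this, pow_add, pow_mul]
  simp

/-- Expand `∑ c_m • u m` in terms of iterated forward differences at 0. -/
lemma sum_smul_eq_sum_fwdDiff (u : ℕ → M) (N : ℕ) (c : ℕ → ℂ) :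
    ∑ m ∈ Finset.range (N + 1), c m • u m
      = ∑ j ∈ Finset.range (N + 1),
          (∑ m ∈ Finset.range (N + 1), c m * (m.choose j : ℂ)) • (fwdDiff (1:ℕ))^[j] u 0 := by
  have hu : ∀ m, m ∈ Finset.range (N + 1) → u m
      = ∑ j ∈ Finset.range (N + 1), ((m.choose j : ℂ)) • (fwdDiff (1:ℕ))^[j] u 0 := by
    intro m hm
    have hmN : m ≤ N := Nat.lt_succ_iff.mp (Finset.mem_range.mp hm)
    have := shift_eq_sum_fwdDiff_iter (1 : ℕ) u m 0
    have h1 : (0 : ℕ) + m • (1 : ℕ) = m := by simp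
    rw [h1] at this
    rw [this]
    rw [Finset.sum_subset (Finset.range_subset_range.mpr (by omega : m + 1 ≤ N + 1))]
    · refine Finset.sum_congr rfl fun j _ => ?_
      rw [Nat.cast_smul_eq_nsmul]
    · intro j _ hj
      have : m < j := by simpa using hj
      simp [Nat.choose_eq_zero_of_lt this]
  calc ∑ m ∈ Finset.range (N + 1), c m • u m
      = ∑ m ∈ Finset.range (N + 1), ∑ j ∈ Finset.range (N + 1),
          (c m * (m.choose j : ℂ)) • (fwdDiff (1:ℕ))^[j] u 0 := by
        refine Finset.sum_congr rfl fun m hm => ?_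
        rw [hu m hm, smul_sum]
        refine Finset.sum_congr rfl fun j _ => ?_
        rw [smul_smul]
    _ = _ := by
        rw [Finset.sum_comm]
        refine Finset.sum_congr rfl fun j _ => ?_
        rw [Finset.sum_smul]

end TriangularAux

namespace TriangularAux

open Polynomial in
/-- If all "Taylor coefficients at 1" vanish then `p = 0`. -/
lemma eq_zero_of_binom_coeffs (p : Polynomial ℂ)
    (hL : ∀ j, j ≤ p.natDegree →
      (∑ m ∈ Finset.range (p.natDegree + 1), p.coeff m * (m.choose j : ℂ)) = 0) :
    p = 0 := by
  set N := p.natDegree with hN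
  have hX : ∀ m : ℕ, m ≤ N → (Polynomial.X : ℂ[X]) ^ m
      = ∑ j ∈ Finset.range (N + 1), (m.choose j : ℂ[X]) * (Polynomial.X - 1) ^ j := by
    intro m hm
    have hb : (Polynomial.X : ℂ[X]) ^ m
        = ∑ j ∈ Finset.range (m + 1), (Polynomial.X - 1) ^ j * (m.choose j : ℂ[X]) := by
      have h1 := add_pow (Polynomial.X - 1 : ℂ[X]) 1 m
      simpa [sub_add_cancel] using h1
    rw [hb, ← Finset.sum_subset (Finset.range_subset_range.mpr (by omega : m + 1 ≤ N + 1))]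
    · exact Finset.sum_congr rfl fun j _ => by ring
    · intro j _ hj
      have : m < j := by simpa using hj
      simp [Nat.choose_eq_zero_of_lt this]
  have key : p = ∑ j ∈ Finset.range (N + 1),
      Polynomial.C (∑ m ∈ Finset.range (N + 1), p.coeff m * (m.choose j : ℂ))
        * (Polynomial.X - 1) ^ j := by
    have hterm : ∀ j ∈ Finset.range (N + 1),
        Polynomial.C (∑ m ∈ Finset.range (N + 1), p.coeff m * (m.choose j : ℂ))
            * (Polynomial.X - 1) ^ j
          = ∑ m ∈ Finset.range (N + 1),
              Polynomial.C (p.coeff m) * ((m.choose j : ℂ[X]) * (Polynomial.X - 1) ^ j) := by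
      intro j _
      rw [map_sum, Finset.sum_mul]
      refine Finset.sum_congr rfl fun m _ => ?_
      rw [map_mul]
      have : (Polynomial.C ((m.choose j : ℂ)) : ℂ[X]) = (m.choose j : ℂ[X]) := by
        simp
      rw [this]; ring
    rw [Finset.sum_congr rfl hterm, Finset.sum_comm]
    conv_lhs => rw [Polynomial.as_sum_range' p (N + 1) (Nat.lt_succ_self N)]
    refine Finset.sum_congr rfl fun m hm => ?_
    rw [← Finset.mul_sum, ← hX m (Nat.lt_succ_iff.mp (Finset.mem_range.mp hm)),
      Polynomial.C_mul_X_pow_eq_monomial]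
  rw [key]
  refine Finset.sum_eq_zero fun j hj => ?_
  rw [hL j (Nat.lt_succ_iff.mp (Finset.mem_range.mp hj))]
  simp

end TriangularAux

namespace TriangularAux

open MvPolynomial

lemma coeff_vanish_of_degreeOf_eq_zero {q : MvPolynomial (Fin 3) ℂ} {i : Fin 3}
    (hq : q.degreeOf i = 0) : ∀ m ∈ q.support, m i = 0 := by
  intro m hm
  have := MvPolynomial.monomial_le_degreeOf i hm
  omega

/-- Two evaluations agree on `q` provided they agree on all variables where `q`
has positive degree. -/
lemma aeval_eq_aeval_of_degreeOf {A : Type*} [CommSemiring A] [Algebra ℂ A]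
    (q : MvPolynomial (Fin 3) ℂ) (f f' : Fin 3 → A)
    (hf : ∀ i, f i = f' i ∨ q.degreeOf i = 0) :
    MvPolynomial.aeval f q = MvPolynomial.aeval f' q := by
  rw [MvPolynomial.aeval_def, MvPolynomial.aeval_def, MvPolynomial.eval₂_eq,
    MvPolynomial.eval₂_eq]
  refine Finset.sum_congr rfl fun m hm => ?_
  congr 1
  refine Finset.prod_congr rfl fun i _ => ?_
  rcases hf i with hfi | hdeg
  · rw [hfi]
  · rw [coeff_vanish_of_degreeOf_eq_zero hdeg m hm, pow_zero, pow_zero]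

lemma degreeOf_eq_zero_iff_mem_supported {q : MvPolynomial (Fin 3) ℂ} :
    q.degreeOf 0 = 0 ↔ q ∈ MvPolynomial.supported ℂ ({1, 2} : Set (Fin 3)) := by
  rw [MvPolynomial.mem_supported]
  constructor
  · intro hq i hi
    simp only [Finset.coe_sort_coe, Set.mem_insert_iff, Set.mem_singleton_iff]
    have hi' : i ∈ q.vars := hi
    have hne : i ≠ 0 := by
      intro h0
      obtain ⟨m, hm, hmi⟩ := (MvPolynomial.mem_vars _).mp hi'
      have := coeff_vanish_of_degreeOf_eq_zero hq m hm
      rw [h0] at hmi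
      exact (Finsupp.mem_support_iff.mp hmi) this
    omega
  · intro hsub
    rw [MvPolynomial.degreeOf_eq_sup]
    refine Nat.eq_zero_of_le_zero (Finset.sup_le fun m hm => ?_)
    by_contra hne
    rw [Nat.not_le] at hne
    have h0 : (0 : Fin 3) ∈ q.vars := (MvPolynomial.mem_vars _).mpr
      ⟨m, hm, Finsupp.mem_support_iff.mpr (by omega)⟩
    have := hsub h0
    simp at this

lemma tri_iterate_map_add {R : Type*} [CommSemiring R] [Algebra ℂ R] (f : R →ₐ[ℂ] R) (m : ℕ)
    (x y : R) : (⇑f)^[m] (x + y) = (⇑f)^[m] x + (⇑f)^[m] y := by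
  induction m generalizing x y with
  | zero => rfl
  | succ k ih => simp [Function.iterate_succ_apply, map_add, ih]

lemma tri_iterate_map_sub {R : Type*} [CommRing R] [Algebra ℂ R] (f : R →ₐ[ℂ] R) (m : ℕ)
    (x y : R) : (⇑f)^[m] (x - y) = (⇑f)^[m] x - (⇑f)^[m] y := by
  induction m generalizing x y with
  | zero => rfl
  | succ k ih => simp [Function.iterate_succ_apply, map_sub, ih]

end TriangularAux

namespace TriangularAux

lemma orbit_fwdDiff {R : Type*} [CommRing R] [Algebra ℂ R] (ψ : R →ₐ[ℂ] R) (i : ℕ) (q : R) :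
    (fwdDiff (1:ℕ))^[i] (fun m => (⇑ψ)^[m] q)
      = fun m => (⇑ψ)^[m] ((fun x => ψ x - x)^[i] q) := by
  induction i generalizing q with
  | zero => rfl
  | succ k ih =>
      rw [Function.iterate_succ_apply]
      have hstep : fwdDiff (1:ℕ) (fun m => (⇑ψ)^[m] q) = fun m => (⇑ψ)^[m] (ψ q - q) := by
        funext m
        show (⇑ψ)^[m + 1] q - (⇑ψ)^[m] q = (⇑ψ)^[m] (ψ q - q)
        rw [tri_iterate_map_sub ψ m, Function.iterate_succ_apply]
      rw [hstep, ih (ψ q - q), ← Function.iterate_succ_apply]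

lemma conj_iterate {R S : Type*} [CommRing R] [CommRing S] [Algebra ℂ R] [Algebra ℂ S]
    (E : R ≃ₐ[ℂ] S) (ψ : R →ₐ[ℂ] R) (τ : S →ₐ[ℂ] S) (hEψ : ∀ q, E (ψ q) = τ (E q))
    (i : ℕ) (q : R) :
    E ((fun x => ψ x - x)^[i] q) = (fun y => τ y - y)^[i] (E q) := by
  induction i generalizing q with
  | zero => rfl
  | succ k ih =>
      rw [Function.iterate_succ_apply', Function.iterate_succ_apply']
      show E (ψ ((fun x => ψ x - x)^[k] q) - (fun x => ψ x - x)^[k] q)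
          = τ ((fun y => τ y - y)^[k] (E q)) - (fun y => τ y - y)^[k] (E q)
      rw [map_sub, hEψ, ih]

lemma vanish_gen {A : Type*} [CommRing A] (a : A) (τ : Polynomial A → Polynomial A)
    (hτ : ∀ Q, τ Q = Polynomial.taylor a Q) :
    ∀ (r : ℕ) (Q : Polynomial A), Q.natDegree ≤ r → (fun y => τ y - y)^[r + 1] Q = 0 := by
  have h0 : τ (0 : Polynomial A) - 0 = 0 := by simp [hτ]
  have hiter0 : ∀ n, (fun y : Polynomial A => τ y - y)^[n] 0 = 0 := by
    intro n
    induction n with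
    | zero => rfl
    | succ k ih => rw [Function.iterate_succ_apply]; show _root_.id ((fun y : Polynomial A => τ y - y)^[k] (τ 0 - 0)) = 0; rw [h0]; exact ih
  intro r
  induction r with
  | zero =>
      intro Q hQ
      simp only [zero_add, Function.iterate_one]
      show τ Q - Q = 0
      conv_lhs => rw [Polynomial.eq_C_of_natDegree_le_zero hQ]
      rw [hτ, Polynomial.taylor_C, sub_self]
  | succ k ih =>
      intro Q hQ
      rw [Function.iterate_succ_apply]
      apply ih
      show (τ Q - Q).natDegree ≤ k
      rw [hτ]
      exact natDegree_taylor_sub_le Q a k hQ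

lemma drop_exact_gen {A : Type*} [CommRing A] [IsDomain A] [CharZero A] {a : A} (ha : a ≠ 0)
    (τ : Polynomial A → Polynomial A) (hτ : ∀ Q, τ Q = Polynomial.taylor a Q)
    (Q : Polynomial A) (hQne : Q ≠ 0) (r : ℕ) (hQdeg : Q.natDegree = r + 1) :
    (τ Q - Q) ≠ 0 ∧ (τ Q - Q).natDegree = r := by
  have hcoeff : (τ Q - Q).coeff r = (r + 1 : A) * Q.coeff (r + 1) * a := by
    rw [hτ]
    exact taylor_sub_coeff Q a r (le_of_eq hQdeg)
  have hlead : Q.coeff (r + 1) ≠ 0 := by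
    have := Polynomial.leadingCoeff_ne_zero.mpr hQne
    rw [Polynomial.leadingCoeff, hQdeg] at this
    exact this
  have hne : (τ Q - Q).coeff r ≠ 0 := by
    rw [hcoeff]
    exact mul_ne_zero (mul_ne_zero (Nat.cast_add_one_ne_zero r) hlead) ha
  refine ⟨fun h0 => by rw [h0] at hne; simp at hne, ?_⟩
  refine le_antisymm ?_ (Polynomial.le_natDegree_of_ne_zero hne)
  rw [hτ]
  exact natDegree_taylor_sub_le Q a r (le_of_eq hQdeg)

end TriangularAux

namespace TriangularAux

open MvPolynomial in
lemma conj_on_generators (h : MvPolynomial (Fin 3) ℂ) (a : MvPolynomial (Fin 2) ℂ)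
    (ψ : MvPolynomial (Fin 3) ℂ →ₐ[ℂ] MvPolynomial (Fin 3) ℂ)
    (τ : Polynomial (MvPolynomial (Fin 2) ℂ) →ₐ[ℂ] Polynomial (MvPolynomial (Fin 2) ℂ))
    (E : MvPolynomial (Fin 3) ℂ ≃ₐ[ℂ] Polynomial (MvPolynomial (Fin 2) ℂ))
    (hψX0 : ψ (X 0) = X 0) (hψX1 : ψ (X 1) = X 1 + h) (hψX2 : ψ (X 2) = X 2)
    (hE0 : E (X 0) = Polynomial.C (X 0)) (hE1 : E (X 1) = Polynomial.X)
    (hE2 : E (X 2) = Polynomial.C (X 1))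
    (hEhC : E h = Polynomial.C a)
    (hτC : ∀ v, τ (Polynomial.C v) = Polynomial.C v)
    (hτX : τ Polynomial.X = Polynomial.X + Polynomial.C a) :
    ∀ q, E (ψ q) = τ (E q) := by
  have hhom : AlgHom.comp (E.toAlgHom) ψ = AlgHom.comp τ E.toAlgHom := by
    apply MvPolynomial.algHom_ext
    intro i
    simp only [AlgHom.comp_apply, AlgEquiv.toAlgHom_eq_coe, AlgHom.coe_coe]
    fin_cases i
    · show E (ψ (X 0)) = τ (E (X 0))
      rw [hψX0, hE0, hτC]
    · show E (ψ (X 1)) = τ (E (X 1))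
      rw [hψX1, hE1, hτX, map_add, hE1, hEhC]
    · show E (ψ (X 2)) = τ (E (X 2))
      rw [hψX2, hE2, hτC]
  intro q
  have h2 := AlgHom.congr_fun hhom q
  exact h2

end TriangularAux

open MvPolynomial in
/-- Minimal polynomial of a triangular automorphism: let `φ` be the `ℂ`-algebra
endomorphism of `ℂ[X,Y,Z]` with `φ(X) = X + g(Y,Z)`, `φ(Y) = Y + h(Z)`, `φ(Z) = Z`,
where `g ≠ 0` does not involve `X` and `h ≠ 0` involves only `Z`, and set
`d := 2 + deg_Y g`. Then `Σ_{m=0}^{d} (−1)^m C(d,m) φ^[m](w) = 0` for each variable `w`,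
and no nonzero polynomial `p ∈ ℂ[T]` of degree `< d` satisfies
`Σ_m (coeff m p) φ^[m](w) = 0` for all variables `w`; i.e. `μ_F(T) = (T − 1)^d`. -/
theorem triangular_automorphism_minimal_polynomial
    (g h : MvPolynomial (Fin 3) ℂ) (hgne : g ≠ 0) (hhne : h ≠ 0)
    (hg : g.degreeOf 0 = 0)
    (hh0 : h.degreeOf 0 = 0) (hh1 : h.degreeOf 1 = 0)
    (d : ℕ) (hd : d = 2 + g.degreeOf 1)
    (φ : MvPolynomial (Fin 3) ℂ →ₐ[ℂ] MvPolynomial (Fin 3) ℂ)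
    (hφX : φ (X 0) = X 0 + g)
    (hφY : φ (X 1) = X 1 + h)
    (hφZ : φ (X 2) = X 2) :
    (∀ i : Fin 3,
        ∑ m ∈ Finset.range (d + 1),
          ((-1 : ℂ) ^ m * (d.choose m : ℂ)) • (⇑φ)^[m] (X i) = 0) ∧
      ∀ p : Polynomial ℂ, p ≠ 0 → p.natDegree < d →
        ∃ i : Fin 3,
          ∑ m ∈ Finset.range (p.natDegree + 1),
            p.coeff m • (⇑φ)^[m] (X i) ≠ 0 := by
  classical
  open TriangularAux in
  set e := g.degreeOf 1 with he
  -- the shift endomorphism ψ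
  set ψ : MvPolynomial (Fin 3) ℂ →ₐ[ℂ] MvPolynomial (Fin 3) ℂ :=
    MvPolynomial.aeval ![X 0, X 1 + h, X 2] with hψdef
  have hψX0 : ψ (X 0) = X 0 := by simp [hψdef]
  have hψX1 : ψ (X 1) = X 1 + h := by simp [hψdef]
  have hψX2 : ψ (X 2) = X 2 := by simp [hψdef]
  -- φ agrees with ψ away from X 0
  have hφeq : ∀ q : MvPolynomial (Fin 3) ℂ, q.degreeOf 0 = 0 → φ q = ψ q := by
    intro q hq
    have hφu : φ q = MvPolynomial.aeval (⇑φ ∘ X) q := by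
      conv_lhs => rw [MvPolynomial.aeval_unique φ]
    rw [hφu, hψdef]
    apply aeval_eq_aeval_of_degreeOf q
    intro i
    fin_cases i
    · right; exact hq
    · left; simp [hφY]
    · left; simp [hφZ]
  -- ψ preserves "no X 0"
  have hψsupp : ∀ q : MvPolynomial (Fin 3) ℂ, q.degreeOf 0 = 0 → (ψ q).degreeOf 0 = 0 := by
    intro q hq
    rw [degreeOf_eq_zero_iff_mem_supported] at hq ⊢
    have hmem : h ∈ MvPolynomial.supported ℂ ({1, 2} : Set (Fin 3)) :=
      degreeOf_eq_zero_iff_mem_supported.mp hh0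
    rw [MvPolynomial.supported_eq_adjoin_X] at hq
    have himg : ψ q ∈ (Algebra.adjoin ℂ (MvPolynomial.X '' ({1, 2} : Set (Fin 3)))).map ψ :=
      ⟨q, hq, rfl⟩
    rw [AlgHom.map_adjoin] at himg
    rw [MvPolynomial.supported_eq_adjoin_X]
    refine Algebra.adjoin_le ?_ himg
    rintro x ⟨y, ⟨i, hi, rfl⟩, rfl⟩
    rw [← MvPolynomial.supported_eq_adjoin_X]
    rcases hi with hi | hi
    · subst hi
      rw [hψX1]
      exact Subalgebra.add_mem _
        (MvPolynomial.X_mem_supported.mpr (by simp)) hmem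
    · rw [Set.mem_singleton_iff] at hi
      subst hi
      rw [hψX2]
      exact MvPolynomial.X_mem_supported.mpr (by simp)
  have hφiter : ∀ q : MvPolynomial (Fin 3) ℂ, q.degreeOf 0 = 0 →
      ∀ m, (⇑φ)^[m] q = (⇑ψ)^[m] q := by
    intro q hq m
    induction m generalizing q with
    | zero => rfl
    | succ k ih =>
        rw [Function.iterate_succ_apply, Function.iterate_succ_apply, hφeq q hq,
          ih (ψ q) (hψsupp q hq)]
  have hψh : ψ h = h := by
    have : ψ h = MvPolynomial.aeval X h := by
      rw [hψdef]
      apply aeval_eq_aeval_of_degreeOf h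
      intro i
      fin_cases i
      · right; exact hh0
      · right; exact hh1
      · left; simp
    rw [this, MvPolynomial.aeval_X_left_apply]
  have hφh : ∀ m, (⇑φ)^[m] h = h := by
    intro m
    induction m with
    | zero => rfl
    | succ k ih => rw [Function.iterate_succ_apply, hφeq h hh0, hψh, ih]
  have hX2m : ∀ m, (⇑φ)^[m] (X 2) = X 2 := by
    intro m
    induction m with
    | zero => rfl
    | succ k ih => rw [Function.iterate_succ_apply, hφZ, ih]
  have hX1m : ∀ m, (⇑φ)^[m] (X 1) = X 1 + m • h := by
    intro m
    induction m with
    | zero => simp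
    | succ k ih =>
        rw [Function.iterate_succ_apply, hφY, tri_iterate_map_add φ k, ih, hφh k, succ_nsmul]
        abel
  have hX0m : ∀ m, (⇑φ)^[m] (X 0) = X 0 + ∑ k ∈ Finset.range m, (⇑ψ)^[k] g := by
    intro m
    induction m with
    | zero => simp
    | succ k ih =>
        rw [Function.iterate_succ_apply, hφX, tri_iterate_map_add φ k, ih, hφiter g hg k,
          Finset.sum_range_succ]
        abel
  -- the equivalence to Polynomial (MvPolynomial (Fin 2) ℂ)
  set E : MvPolynomial (Fin 3) ℂ ≃ₐ[ℂ] Polynomial (MvPolynomial (Fin 2) ℂ) :=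
    (MvPolynomial.renameEquiv ℂ (Equiv.swap 0 1)).trans (MvPolynomial.finSuccEquiv ℂ 2) with hEdef
  have hswap0 : (Equiv.swap (0 : Fin 3) 1) 0 = 1 := Equiv.swap_apply_left 0 1
  have hswap1 : (Equiv.swap (0 : Fin 3) 1) 1 = 0 := Equiv.swap_apply_right 0 1
  have hswap2 : (Equiv.swap (0 : Fin 3) 1) 2 = 2 :=
    Equiv.swap_apply_of_ne_of_ne (by decide) (by decide)
  have hsucc0 : ((1 : Fin 3)) = Fin.succ (0 : Fin 2) := rfl
  have hsucc1 : ((2 : Fin 3)) = Fin.succ (1 : Fin 2) := rfl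
  have hE0 : E (X 0) = Polynomial.C (X 0) := by
    rw [hEdef]
    rw [AlgEquiv.trans_apply, MvPolynomial.renameEquiv_apply, MvPolynomial.rename_X,
      hswap0, hsucc0, MvPolynomial.finSuccEquiv_X_succ]
  have hE1 : E (X 1) = Polynomial.X := by
    rw [hEdef]
    rw [AlgEquiv.trans_apply, MvPolynomial.renameEquiv_apply, MvPolynomial.rename_X,
      hswap1, MvPolynomial.finSuccEquiv_X_zero]
  have hE2 : E (X 2) = Polynomial.C (X 1) := by
    rw [hEdef]
    rw [AlgEquiv.trans_apply, MvPolynomial.renameEquiv_apply, MvPolynomial.rename_X,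
      hswap2, hsucc1, MvPolynomial.finSuccEquiv_X_succ]
  have hEnatdeg : ∀ q : MvPolynomial (Fin 3) ℂ, (E q).natDegree = q.degreeOf 1 := by
    intro q
    rw [hEdef]
    simp only [AlgEquiv.trans_apply, MvPolynomial.renameEquiv_apply]
    rw [MvPolynomial.natDegree_finSuccEquiv]
    have := MvPolynomial.degreeOf_rename_of_injective
      (Equiv.injective (Equiv.swap (0 : Fin 3) 1)) (p := q) 1
    rw [hswap1] at this
    exact this
  have hEg_deg : (E g).natDegree = e := hEnatdeg g
  have hEg_ne : E g ≠ 0 := by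
    intro h0
    exact hgne (E.injective (by rw [h0, map_zero]))
  have hEh_ne : E h ≠ 0 := by
    intro h0
    exact hhne (E.injective (by rw [h0, map_zero]))
  set a : MvPolynomial (Fin 2) ℂ := (E h).coeff 0 with hadef
  have hEhC : E h = Polynomial.C a := by
    apply Polynomial.eq_C_of_natDegree_le_zero
    rw [hEnatdeg h, hh1]
  have ha : a ≠ 0 := by
    intro h0
    apply hEh_ne
    rw [hEhC, h0, map_zero]
  -- the translation endomorphism τ
  set τ : Polynomial (MvPolynomial (Fin 2) ℂ) →ₐ[ℂ] Polynomial (MvPolynomial (Fin 2) ℂ) :=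
    (Polynomial.aeval (R := MvPolynomial (Fin 2) ℂ) (Polynomial.X + Polynomial.C a)).restrictScalars ℂ
    with hτdef
  have hτtaylor : ∀ Q, τ Q = Polynomial.taylor a Q := by
    intro Q
    rw [hτdef]
    show Polynomial.aeval (Polynomial.X + Polynomial.C a) Q = _
    rw [Polynomial.taylor_apply, Polynomial.comp_eq_aeval]
  have hτC : ∀ v : MvPolynomial (Fin 2) ℂ, τ (Polynomial.C v) = Polynomial.C v := by
    intro v
    rw [hτtaylor, Polynomial.taylor_C]
  have hτX : τ Polynomial.X = Polynomial.X + Polynomial.C a := by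
    rw [hτdef]
    show Polynomial.aeval (Polynomial.X + Polynomial.C a) Polynomial.X = _
    rw [Polynomial.aeval_X]
  have hEψ : ∀ q, E (ψ q) = τ (E q) :=
    conj_on_generators h a ψ τ E hψX0 hψX1 hψX2 hE0 hE1 hE2 hEhC hτC hτX
  have hstep0 : fwdDiff (1:ℕ) (fun m => (⇑φ)^[m] (X 0)) = fun m => (⇑ψ)^[m] g := by
    funext m
    show (⇑φ)^[m+1] (X 0) - (⇑φ)^[m] (X 0) = (⇑ψ)^[m] g
    rw [hX0m, hX0m, Finset.sum_range_succ]
    abel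
  have hDg : ∀ r : ℕ, e ≤ r → (fun x => ψ x - x)^[r + 1] g = 0 := by
    intro r hr
    apply E.injective
    rw [map_zero, conj_iterate E ψ τ hEψ]
    exact vanish_gen a ⇑τ hτtaylor r (E g) (by rw [hEg_deg]; exact hr)
  constructor
  · intro i
    rw [alt_sum_eq_fwdDiff (fun m => (⇑φ)^[m] (X i)) d]
    fin_cases i
    · show ((-1:ℂ)^d) • (fwdDiff (1:ℕ))^[d] (fun m => (⇑φ)^[m] (X 0)) 0 = 0
      have hd' : d = (e + 1) + 1 := by omega
      rw [hd', Function.iterate_succ_apply, hstep0, orbit_fwdDiff ψ (e+1) g,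
        hDg e le_rfl]
      simp
    · show ((-1:ℂ)^d) • (fwdDiff (1:ℕ))^[d] (fun m => (⇑φ)^[m] (X 1)) 0 = 0
      have hfun : (fun m => (⇑φ)^[m] (X 1)) = fun m : ℕ => X 1 + m • h := funext hX1m
      rw [hfun]
      have hstep1 : fwdDiff (1:ℕ) (fun m : ℕ => X 1 + m • h) = fun _ : ℕ => h := by
        funext m
        show (X 1 + (m+1) • h) - (X 1 + m • h) = h
        rw [succ_nsmul]
        abel
      have hd' : d = (e + 1) + 1 := by omega
      rw [hd', Function.iterate_succ_apply, hstep1,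
        fwdDiff_iter_const_eq_zero h (e+1) (Nat.succ_ne_zero _)]
      simp
    · show ((-1:ℂ)^d) • (fwdDiff (1:ℕ))^[d] (fun m => (⇑φ)^[m] (X 2)) 0 = 0
      have hfun : (fun m => (⇑φ)^[m] (X 2)) = fun _ : ℕ => (X 2 : MvPolynomial (Fin 3) ℂ) :=
        funext hX2m
      rw [hfun, fwdDiff_iter_const_eq_zero (X 2 : MvPolynomial (Fin 3) ℂ) d (by omega)]
      simp
  · intro p hpne hpdeg
    by_contra hcon
    push_neg at hcon
    haveI hnzs2 : NoZeroSMulDivisors ℂ (MvPolynomial (Fin 2) ℂ) :=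
      inferInstance
    haveI hnzs3 : NoZeroSMulDivisors ℂ (MvPolynomial (Fin 3) ℂ) :=
      inferInstance
    set N := p.natDegree with hNdef
    set L : ℕ → ℂ := fun j => ∑ m ∈ Finset.range (N + 1), p.coeff m * (m.choose j : ℂ)
      with hLdef
    have hNe : N ≤ e + 1 := by omega
    have hsum : ∀ i : Fin 3,
        ∑ j ∈ Finset.range (N + 1),
          L j • (fwdDiff (1:ℕ))^[j] (fun m => (⇑φ)^[m] (X i)) 0 = 0 := by
      intro i
      rw [← sum_smul_eq_sum_fwdDiff (fun m => (⇑φ)^[m] (X i)) N (fun m => p.coeff m)]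
      exact hcon i
    have hL0 : L 0 = 0 := by
      have h2 := hsum 2
      have hfun : (fun m => (⇑φ)^[m] (X 2)) = fun _ : ℕ => (X 2 : MvPolynomial (Fin 3) ℂ) :=
        funext hX2m
      rw [hfun] at h2
      rw [Finset.sum_eq_single_of_mem 0 (Finset.mem_range.mpr (by omega))] at h2
      · simp only [Function.iterate_zero, id_eq] at h2
        exact (smul_eq_zero.mp h2).resolve_right (MvPolynomial.X_ne_zero 2)
      · intro j _ hjne
        rw [fwdDiff_iter_const_eq_zero (X 2 : MvPolynomial (Fin 3) ℂ) j hjne]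
        simp
    have hstep1 : fwdDiff (1:ℕ) (fun m : ℕ => X 1 + m • h) = fun _ : ℕ => h := by
      funext m
      show (X 1 + (m+1) • h) - (X 1 + m • h) = h
      rw [succ_nsmul]
      abel
    have hL1 : 1 ≤ N → L 1 = 0 := by
      intro hN
      have h1 := hsum 1
      have hfun : (fun m => (⇑φ)^[m] (X 1)) = fun m : ℕ => X 1 + m • h := funext hX1m
      rw [hfun] at h1
      rw [Finset.sum_eq_single_of_mem 1 (Finset.mem_range.mpr (by omega))] at h1
      · rw [Function.iterate_one, hstep1] at h1
        exact (smul_eq_zero.mp h1).resolve_right hhne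
      · intro j _ hjne
        rcases j with _ | k
        · rw [hL0]; simp
        · have hk : k ≠ 0 := by omega
          rw [Function.iterate_succ_apply, hstep1, fwdDiff_iter_const_eq_zero h k hk]
          simp
    have hDj : ∀ j : ℕ, (fwdDiff (1:ℕ))^[j + 1] (fun m => (⇑φ)^[m] (X 0)) 0
        = (fun x => ψ x - x)^[j] g := by
      intro j
      rw [Function.iterate_succ_apply, hstep0, orbit_fwdDiff ψ j g]
      simp
    have hchain : ∀ i : ℕ, i ≤ e →
        (fun y => τ y - y)^[i] (E g) ≠ 0 ∧
          ((fun y => τ y - y)^[i] (E g)).natDegree = e - i := by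
      intro i
      induction i with
      | zero => intro _; exact ⟨hEg_ne, by simpa using hEg_deg⟩
      | succ k ih =>
          intro hk
          obtain ⟨hne, hdeg⟩ := ih (by omega)
          rw [Function.iterate_succ_apply']
          exact drop_exact_gen ha ⇑τ hτtaylor _ hne (e - (k+1)) (by rw [hdeg]; omega)
    have hLall : ∀ j, j ≤ N → L j = 0 := by
      intro j
      induction j using Nat.strong_induction_on with
      | _ j IH =>
        intro hjN
        rcases j with _ | j0
        · exact hL0
        rcases j0 with _ | j1
        · exact hL1 hjN
        have hN2 : 2 ≤ N := le_trans (by omega) hjN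
        have h0 := hsum 0
        rw [Finset.range_eq_Ico,
          ← Finset.sum_Ico_consecutive _ (by omega : (0:ℕ) ≤ 2) (by omega : 2 ≤ N + 1)] at h0
        have hlow : ∑ j' ∈ Finset.Ico 0 2,
            L j' • (fwdDiff (1:ℕ))^[j'] (fun m => (⇑φ)^[m] (X 0)) 0 = 0 := by
          rw [← Finset.range_eq_Ico, Finset.sum_range_succ, Finset.sum_range_one, hL0,
            hL1 (by omega)]
          simp
        rw [hlow, zero_add] at h0
        have hB : ∑ j' ∈ Finset.Ico 2 (N + 1),
            L j' • (fun y => τ y - y)^[j' - 1] (E g) = 0 := by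
          have hEsum := congrArg E h0
          rw [map_sum, map_zero] at hEsum
          rw [← hEsum]
          refine Finset.sum_congr rfl fun j' hj' => ?_
          obtain ⟨hj'2, hj'N⟩ := Finset.mem_Ico.mp hj'
          have hj'eq : j' - 1 + 1 = j' := by omega
          rw [map_smul]
          congr 1
          have h4 := hDj (j' - 1)
          rw [hj'eq] at h4
          rw [h4, conj_iterate E ψ τ hEψ]
        have hcoeff := congrArg (fun Q => Polynomial.coeff Q (e - (j1 + 1))) hB
        simp only [Polynomial.finset_sum_coeff, Polynomial.coeff_smul,
          Polynomial.coeff_zero] at hcoeff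
        rw [Finset.sum_eq_single_of_mem (j1 + 2)
          (Finset.mem_Ico.mpr ⟨by omega, by omega⟩)] at hcoeff
        · obtain ⟨hbne, hbdeg⟩ := hchain (j1 + 1) (by omega)
          have hlead : Polynomial.coeff ((fun y => τ y - y)^[j1 + 2 - 1] (E g))
              (e - (j1 + 1)) ≠ 0 := by
            have h3 := Polynomial.leadingCoeff_ne_zero.mpr hbne
            rw [Polynomial.leadingCoeff, hbdeg] at h3
            have h5 : (j1 + 2 - 1) = j1 + 1 := by omega
            rw [h5]
            exact h3
          exact (smul_eq_zero.mp hcoeff).resolve_right hlead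
        · intro j' hj' hne'
          obtain ⟨hj'2, hj'N⟩ := Finset.mem_Ico.mp hj'
          rcases lt_or_gt_of_ne hne' with hlt | hgt
          · rw [IH j' hlt (by omega)]
            simp
          · obtain ⟨hbne', hdeg'⟩ := hchain (j' - 1) (by omega)
            rw [Polynomial.coeff_eq_zero_of_natDegree_lt (by rw [hdeg']; omega)]
            simp
    exact hpne (eq_zero_of_binom_coeffs p fun j hj => hLall j hj)
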